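/- Any circuit on n qubits over the gate set {CNOT, T} containing k T gates can be implemented by a circuit over {CNOT, T} on n qubits plus m ancilla qubits (initialized to and returned in state |0⟩) with T-depth at most ⌈k/(m+1)⌉. -/

import Mathlib

open Matrix

noncomputable section

/-- `ω = e^{iπ/4}`. -/
def omega : ℂ := Complex.exp (Complex.I * (Real.pi / 4 : ℝ))

/-- Gates of the `{CNOT, T}` gate set on qubits labeled by `Q`. -/
inductive CTGate (Q : Type) where
  | cnot (c t : Q) (h : c ≠ t)
  | t (i : Q)

variable {Q : Type} [Fintype Q] [DecidableEq Q]

/-- The unitary of a gate on computational basis states `Q → ZMod 2`: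
`CNOT : |a⟩|b⟩ ↦ |a⟩|b ⊕ a⟩`, `T : |a⟩ ↦ ω^a |a⟩`. -/
def ctGateMatrix : CTGate Q → Matrix (Q → ZMod 2) (Q → ZMod 2) ℂ
  | .cnot c t _ => fun b a => if b = Function.update a t (a t + a c) then 1 else 0
  | .t i => fun b a => if b = a then (if a i = 1 then omega else 1) else 0

/-- The unitary of a circuit (a list of gates, applied in order). -/
def circMatrix (L : List (CTGate Q)) : Matrix (Q → ZMod 2) (Q → ZMod 2) ℂ :=
  (L.map ctGateMatrix).prod

/-- The number of `T` gates in a circuit. -/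
def tCount (L : List (CTGate Q)) : ℕ :=
  L.countP (fun g => match g with | .t _ => true | _ => false)

/-- A layer of a staged circuit: either a layer of CNOT gates (contributing no
`T`-depth) or a `T`-stage, i.e. `T` gates applied in parallel to a set of
distinct qubits. -/
inductive Layer (Q : Type) where
  | cnots (L : List {p : Q × Q // p.1 ≠ p.2})
  | tStage (s : Finset Q)

/-- The unitary of a layer. -/
def layerMatrix : Layer Q → Matrix (Q → ZMod 2) (Q → ZMod 2) ℂ
  | .cnots L => (L.map (fun p => ctGateMatrix (CTGate.cnot p.1.1 p.1.2 p.2))).prod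
  | .tStage s => Matrix.diagonal fun a => ∏ i ∈ s, (if a i = 1 then omega else 1)

/-- The unitary of a staged circuit. -/
def stagedMatrix (C : List (Layer Q)) : Matrix (Q → ZMod 2) (Q → ZMod 2) ℂ :=
  (C.map layerMatrix).prod

/-- The `T`-depth of a staged circuit: the number of `T`-stages. -/
def tDepth (C : List (Layer Q)) : ℕ :=
  C.countP (fun l => match l with | .tStage _ => true | _ => false)

/-- The embedding of an `n`-qubit state into `n + m` qubits, with the `m`
ancilla qubits in state `|0⟩`. -/
def embed (n m : ℕ) (v : (Fin n → ZMod 2) → ℂ) : ((Fin n ⊕ Fin m) → ZMod 2) → ℂ :=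
  fun b => if ∀ j : Fin m, b (Sum.inr j) = 0 then v (b ∘ Sum.inl) else 0

namespace S9

lemma zmod2_add_self (x : ZMod 2) : x + x = 0 := by revert x; decide

/-! ### Basis-state semantics of circuits -/

def act : CTGate Q → (Q → ZMod 2) → (Q → ZMod 2)
  | .cnot c t _, a => Function.update a t (a t + a c)
  | .t _, a => a

def actL : List (CTGate Q) → (Q → ZMod 2) → (Q → ZMod 2)
  | [], a => a
  | g :: L, a => act g (actL L a)

def gphase : CTGate Q → (Q → ZMod 2) → ℂ
  | .cnot _ _ _, _ => 1
  | .t i, a => if a i = 1 then omega else 1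

def phaseL : List (CTGate Q) → (Q → ZMod 2) → ℂ
  | [], _ => 1
  | g :: L, a => gphase g (actL L a) * phaseL L a

@[simp] lemma actL_nil (a : Q → ZMod 2) : actL [] a = a := rfl
@[simp] lemma actL_cons (g : CTGate Q) (L) (a) : actL (g :: L) a = act g (actL L a) := rfl
@[simp] lemma phaseL_nil (a : Q → ZMod 2) : phaseL [] a = 1 := rfl
@[simp] lemma phaseL_cons (g : CTGate Q) (L) (a) :
    phaseL (g :: L) a = gphase g (actL L a) * phaseL L a := rfl

lemma actL_append (L M : List (CTGate Q)) (a) : actL (L ++ M) a = actL L (actL M a) := by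
  induction L with
  | nil => rfl
  | cons g L ih => simp [ih]

lemma phaseL_append (L M : List (CTGate Q)) (a) :
    phaseL (L ++ M) a = phaseL L (actL M a) * phaseL M a := by
  induction L with
  | nil => simp
  | cons g L ih => simp [ih, actL_append, mul_assoc]

lemma act_act (g : CTGate Q) (a) : act g (act g a) = a := by
  cases g with
  | t i => rfl
  | cnot c t h =>
    funext x
    rcases eq_or_ne x t with rfl | hx
    · simp [act, Function.update_of_ne h, add_assoc, zmod2_add_self]
    · simp [act, Function.update_of_ne hx]

lemma actL_rev (L : List (CTGate Q)) (a) : actL L.reverse (actL L a) = a := by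
  induction L generalizing a with
  | nil => rfl
  | cons g L ih =>
    simp only [List.reverse_cons, actL_cons]
    rw [actL_append]
    simp only [actL_cons, actL_nil]
    rw [act_act]
    exact ih a

/-! ### Generalized permutation matrices -/

lemma mul_apply_genperm {M N : Matrix (Q → ZMod 2) (Q → ZMod 2) ℂ}
    {f g : (Q → ZMod 2) → (Q → ZMod 2)} {p q : (Q → ZMod 2) → ℂ}
    (hM : ∀ b a, M b a = if b = f a then p a else 0)
    (hN : ∀ b a, N b a = if b = g a then q a else 0) :
    ∀ b a, (M * N) b a = if b = f (g a) then p (g a) * q a else 0 := by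
  intro b a
  rw [Matrix.mul_apply, Finset.sum_eq_single (g a)]
  · rw [hM, hN]; simp [ite_mul]
  · intro c _ hc; rw [hN, if_neg hc, mul_zero]
  · intro h; exact absurd (Finset.mem_univ _) h

lemma ctGateMatrix_apply (g : CTGate Q) :
    ∀ b a, ctGateMatrix g b a = if b = act g a then gphase g a else 0 := by
  cases g <;> intro b a <;> rfl

lemma circMatrix_nil : circMatrix ([] : List (CTGate Q)) = 1 := by simp [circMatrix]

lemma circMatrix_cons (g : CTGate Q) (L) :
    circMatrix (g :: L) = ctGateMatrix g * circMatrix L := by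
  simp [circMatrix]

lemma circMatrix_apply (L : List (CTGate Q)) :
    ∀ b a, circMatrix L b a = if b = actL L a then phaseL L a else 0 := by
  induction L with
  | nil => intro b a; rw [circMatrix_nil]; simp [Matrix.one_apply]; congr
  | cons g L ih =>
    intro b a
    rw [circMatrix_cons, mul_apply_genperm (ctGateMatrix_apply g) ih]
    rfl

def cg (p : {p : Q × Q // p.1 ≠ p.2}) : CTGate Q := CTGate.cnot p.1.1 p.1.2 p.2

lemma phaseL_cnots (G : List {p : Q × Q // p.1 ≠ p.2}) (a) : phaseL (G.map cg) a = 1 := by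
  induction G with
  | nil => rfl
  | cons p G ih => simp [cg, gphase, ih]

lemma layerMatrix_cnots (G : List {p : Q × Q // p.1 ≠ p.2}) :
    layerMatrix (Layer.cnots G) = circMatrix (G.map cg) := by
  rw [circMatrix, List.map_map]; rfl

lemma layer_cnots_apply (G : List {p : Q × Q // p.1 ≠ p.2}) :
    ∀ b a, layerMatrix (Layer.cnots G) b a = if b = actL (G.map cg) a then 1 else 0 := by
  intro b a
  rw [layerMatrix_cnots, circMatrix_apply, phaseL_cnots]

lemma layer_tStage_apply (s : Finset Q) : ∀ b a,
    layerMatrix (Layer.tStage s) b a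
      = if b = a then (∏ i ∈ s, if a i = 1 then omega else 1) else 0 := by
  intro b a
  show Matrix.diagonal _ b a = _
  rw [Matrix.diagonal_apply]
  rcases eq_or_ne b a with rfl | h
  · simp
  · simp [h]

lemma stagedMatrix_nil : stagedMatrix ([] : List (Layer Q)) = 1 := by simp [stagedMatrix]

lemma stagedMatrix_cons (l : Layer Q) (C) :
    stagedMatrix (l :: C) = layerMatrix l * stagedMatrix C := by simp [stagedMatrix]

lemma stagedMatrix_append (C D : List (Layer Q)) :
    stagedMatrix (C ++ D) = stagedMatrix C * stagedMatrix D := by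
  simp [stagedMatrix]

lemma tDepth_append (C D : List (Layer Q)) : tDepth (C ++ D) = tDepth C + tDepth D := by
  simp [tDepth, List.countP_append]

/-! ### tCount lemmas -/

lemma tCount_nil : tCount ([] : List (CTGate Q)) = 0 := rfl

lemma tCount_cons_cnot (c t : Q) (h : c ≠ t) (L : List (CTGate Q)) :
    tCount (.cnot c t h :: L) = tCount L := by
  simp [tCount, List.countP_cons]

lemma tCount_cons_t (i : Q) (L : List (CTGate Q)) : tCount (.t i :: L) = tCount L + 1 := by
  simp [tCount, List.countP_cons]

lemma tCount_append (A B : List (CTGate Q)) : tCount (A ++ B) = tCount A + tCount B := by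
  simp [tCount, List.countP_append]

lemma phaseL_of_tCount_zero {L : List (CTGate Q)} (h : tCount L = 0) (a) : phaseL L a = 1 := by
  induction L with
  | nil => rfl
  | cons g L ih =>
    cases g with
    | cnot c t hne => rw [tCount_cons_cnot] at h; simp [gphase, ih h]
    | t i => rw [tCount_cons_t] at h; omega

lemma exists_split (L : List (CTGate Q)) : ∀ j, j ≤ tCount L →
    ∃ A B, L = A ++ B ∧ tCount A = j := by
  induction L with
  | nil =>
    intro j hj
    refine ⟨[], [], rfl, ?_⟩
    rw [tCount_nil] at hj ⊢
    omega
  | cons g L ih =>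
    intro j hj
    cases g with
    | cnot c t hne =>
      rw [tCount_cons_cnot] at hj
      obtain ⟨A, B, hAB, hA⟩ := ih j hj
      exact ⟨.cnot c t hne :: A, B, by rw [hAB]; rfl, by rw [tCount_cons_cnot, hA]⟩
    | t i =>
      rw [tCount_cons_t] at hj
      cases j with
      | zero => exact ⟨[], .t i :: L, rfl, rfl⟩
      | succ j' =>
        obtain ⟨A, B, hAB, hA⟩ := ih j' (by omega)
        exact ⟨.t i :: A, B, by rw [hAB]; rfl, by rw [tCount_cons_t, hA]⟩

/-! ### Linearity of CNOT circuits -/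

lemma sum_symmDiff (S T : Finset Q) (a : Q → ZMod 2) :
    ∑ i ∈ symmDiff S T, a i = (∑ i ∈ S, a i) + ∑ i ∈ T, a i := by
  rw [symmDiff_def, Finset.sup_eq_union, Finset.sum_union disjoint_sdiff_sdiff,
    ← Finset.sum_inter_add_sum_sdiff S T a, ← Finset.sum_inter_add_sum_sdiff T S a,
    Finset.inter_comm T S]
  have hz := zmod2_add_self (∑ i ∈ S ∩ T, a i)
  have hre : (∑ i ∈ S ∩ T, a i + ∑ i ∈ S \ T, a i) + (∑ i ∈ S ∩ T, a i + ∑ i ∈ T \ S, a i)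
      = (∑ i ∈ S ∩ T, a i + ∑ i ∈ S ∩ T, a i) + (∑ i ∈ S \ T, a i + ∑ i ∈ T \ S, a i) := by
    ring
  rw [hre, hz, zero_add]

def lin : List (CTGate Q) → Q → Finset Q
  | [], q => {q}
  | .cnot c t _ :: L, q => if q = t then symmDiff (lin L t) (lin L c) else lin L q
  | .t _ :: L, q => lin L q

lemma lin_spec (L : List (CTGate Q)) : ∀ q a, actL L a q = ∑ i ∈ lin L q, a i := by
  induction L with
  | nil => intro q a; simp [lin]
  | cons g L ih =>
    intro q a
    cases g with
    | t i => simpa [lin, act] using ih q a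
    | cnot c t hne =>
      rcases eq_or_ne q t with rfl | hq
      · have hl : lin (CTGate.cnot c q hne :: L) q = symmDiff (lin L q) (lin L c) := by
          simp [lin]
        rw [hl, sum_symmDiff, ← ih, ← ih]
        simp [act]
      · have hl : lin (CTGate.cnot c t hne :: L) q = lin L q := by simp [lin, hq]
        rw [hl, ← ih]
        simp [act, Function.update_of_ne hq]

def chi (S : Finset Q) (a : Q → ZMod 2) : ℂ := if (∑ i ∈ S, a i) = 1 then omega else 1

def tSpecs : List (CTGate Q) → List (Finset Q)
  | [] => []
  | .cnot _ _ _ :: L => tSpecs L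
  | .t i :: L => lin L i :: tSpecs L

lemma tSpecs_length (L : List (CTGate Q)) : (tSpecs L).length = tCount L := by
  induction L with
  | nil => rfl
  | cons g L ih =>
    cases g with
    | cnot c t h => rw [tCount_cons_cnot]; simpa [tSpecs] using ih
    | t i => rw [tCount_cons_t]; simpa [tSpecs] using ih

lemma tSpecs_phase (L : List (CTGate Q)) (a) :
    phaseL L a = ((tSpecs L).map (fun S => chi S a)).prod := by
  induction L with
  | nil => rfl
  | cons g L ih =>
    cases g with
    | cnot c t h => simp [tSpecs, gphase, ih]
    | t i => simp [tSpecs, gphase, ih, chi, lin_spec]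

/-! ### parity gadgets -/

def mkPairs : List Q → Q → List {p : Q × Q // p.1 ≠ p.2}
  | [], _ => []
  | i :: l, p => if h : i = p then mkPairs l p else ⟨(i, p), h⟩ :: mkPairs l p

lemma mkPairs_act (l : List Q) (p : Q) (hl : ∀ i ∈ l, i ≠ p) (a : Q → ZMod 2) :
    actL ((mkPairs l p).map cg) a = Function.update a p (a p + (l.map a).sum) := by
  induction l with
  | nil =>
    simp [mkPairs]
  | cons i l ih =>
    have hip : i ≠ p := hl i List.mem_cons_self
    have hl' : ∀ j ∈ l, j ≠ p := fun j hj => hl j (List.mem_cons_of_mem _ hj)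
    simp only [mkPairs, dif_neg hip, List.map_cons, actL_cons, ih hl']
    funext x
    rcases eq_or_ne x p with rfl | hx
    · simp [cg, act, Function.update_of_ne hip]
      ring
    · simp [cg, act, Function.update_of_ne hx]

def gadget (S : Finset Q) (p : Q) : List {p : Q × Q // p.1 ≠ p.2} :=
  mkPairs (S.erase p).toList p

lemma gadget_act (S : Finset Q) (p : Q) (hp : p ∉ S) (a : Q → ZMod 2) :
    actL ((gadget S p).map cg) a = Function.update a p (a p + ∑ i ∈ S, a i) := by
  rw [gadget, mkPairs_act _ _ (fun i hi => (Finset.mem_erase.mp (Finset.mem_toList.mp hi)).1),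
    Finset.sum_map_toList, Finset.erase_eq_of_notMem hp]

def runPairs : List (Finset Q × Q) → List {p : Q × Q // p.1 ≠ p.2}
  | [] => []
  | sp :: r => gadget sp.1 sp.2 ++ runPairs r

lemma runPairs_act (specs : List (Finset Q × Q))
    (hnd : (specs.map Prod.snd).Nodup)
    (hmem : ∀ sp ∈ specs, sp.2 ∉ sp.1)
    (hpw : specs.Pairwise fun sp sq => sq.2 ∉ sp.1) (a : Q → ZMod 2) :
    (∀ x, x ∉ specs.map Prod.snd → actL ((runPairs specs).map cg) a x = a x) ∧
    (∀ sp ∈ specs, actL ((runPairs specs).map cg) a sp.2 = a sp.2 + ∑ i ∈ sp.1, a i) := by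
  induction specs with
  | nil => constructor <;> simp [runPairs]
  | cons sp r ih =>
    obtain ⟨S, p⟩ := sp
    rw [List.map_cons, List.nodup_cons] at hnd
    obtain ⟨hp, hnd'⟩ := hnd
    have hpS : p ∉ S := hmem (S, p) List.mem_cons_self
    have ihh := ih hnd' (fun sq hq => hmem sq (List.mem_cons_of_mem _ hq)) hpw.of_cons
    have hb : actL ((runPairs ((S, p) :: r)).map cg) a
        = Function.update (actL ((runPairs r).map cg) a) p
            ((actL ((runPairs r).map cg) a) p + ∑ i ∈ S, (actL ((runPairs r).map cg) a) i) := by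
      rw [show runPairs ((S, p) :: r) = gadget S p ++ runPairs r from rfl,
        List.map_append, actL_append, gadget_act _ _ hpS]
    have hbp : actL ((runPairs r).map cg) a p = a p := ihh.1 p hp
    have hbS : ∀ i ∈ S, actL ((runPairs r).map cg) a i = a i := by
      intro i hi
      apply ihh.1
      intro hmem'
      obtain ⟨sq, hq, hq2⟩ := List.mem_map.mp hmem'
      exact (List.rel_of_pairwise_cons hpw hq) (by rw [hq2]; exact hi)
    constructor
    · intro x hx
      have hx1 : x ≠ p ∧ x ∉ r.map Prod.snd := by simpa using hx
      rw [hb, Function.update_of_ne hx1.1]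
      exact ihh.1 x hx1.2
    · intro sq hq
      rcases List.mem_cons.mp hq with rfl | hq'
      · dsimp only
        rw [hb, Function.update_self, hbp]
        congr 1
        exact Finset.sum_congr rfl (fun i hi => hbS i hi)
      · have hq2 : sq.2 ≠ p := by
          intro e
          exact hp (List.mem_map.mpr ⟨sq, hq', e⟩)
        rw [hb, Function.update_of_ne hq2]
        exact ihh.2 sq hq'

end S9

namespace S9

variable {n m : ℕ}

/-! ### Embedding into `Fin n ⊕ Fin m` -/

def emb (a : Fin n → ZMod 2) : Fin n ⊕ Fin m → ZMod 2 := Sum.elim a 0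

@[simp] lemma emb_inl (a : Fin n → ZMod 2) (i : Fin n) : emb (m := m) a (Sum.inl i) = a i := rfl
@[simp] lemma emb_inr (a : Fin n → ZMod 2) (j : Fin m) : emb a (Sum.inr j) = 0 := rfl

def liftG : CTGate (Fin n) → CTGate (Fin n ⊕ Fin m)
  | .cnot c t h => .cnot (Sum.inl c) (Sum.inl t) (fun e => h (Sum.inl_injective e))
  | .t i => .t (Sum.inl i)

lemma act_liftG (g : CTGate (Fin n)) (a : Fin n → ZMod 2) :
    act (liftG (m := m) g) (emb a) = emb (act g a) := by
  cases g with
  | t i => rfl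
  | cnot c t h =>
    funext x
    cases x with
    | inl q =>
      by_cases hq : q = t
      · subst hq; simp [act, liftG, Function.update_apply]
      · simp [act, liftG, Function.update_apply, hq]
    | inr j => simp [act, liftG, Function.update_apply]

lemma actL_liftL (L : List (CTGate (Fin n))) (a : Fin n → ZMod 2) :
    actL (L.map (liftG (m := m))) (emb a) = emb (actL L a) := by
  induction L with
  | nil => rfl
  | cons g L ih => simp [ih, act_liftG]

lemma gphase_liftG (g : CTGate (Fin n)) (a : Fin n → ZMod 2) :
    gphase (liftG (m := m) g) (emb a) = gphase g a := by
  cases g <;> rfl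

lemma phaseL_liftL (L : List (CTGate (Fin n))) (a : Fin n → ZMod 2) :
    phaseL (L.map (liftG (m := m))) (emb a) = phaseL L a := by
  induction L with
  | nil => rfl
  | cons g L ih => simp [ih, actL_liftL, gphase_liftG]

def pOf : List (CTGate (Fin n ⊕ Fin m)) →
    List {p : (Fin n ⊕ Fin m) × (Fin n ⊕ Fin m) // p.1 ≠ p.2}
  | [] => []
  | .cnot c t h :: L => ⟨(c, t), h⟩ :: pOf L
  | .t _ :: L => pOf L

lemma pOf_act (L : List (CTGate (Fin n ⊕ Fin m))) (a) :
    actL ((pOf L).map cg) a = actL L a := by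
  induction L with
  | nil => rfl
  | cons g L ih =>
    cases g with
    | cnot c t h => simp [pOf, cg, ih]
    | t i => simp [pOf, ih, act]

/-! ### Implementation predicate -/

def Impl (C : List (Layer (Fin n ⊕ Fin m))) (f : (Fin n → ZMod 2) → Fin n → ZMod 2)
    (p : (Fin n → ZMod 2) → ℂ) : Prop :=
  ∀ b a, stagedMatrix C b (emb a) = if b = emb (f a) then p a else 0

lemma Impl.congr {C : List (Layer (Fin n ⊕ Fin m))} {f f' p p'}
    (h : Impl C f p) (hf : ∀ a, f' a = f a) (hp : ∀ a, p' a = p a) : Impl C f' p' := by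
  intro b a; rw [hf, hp]; exact h b a

lemma Impl.append {C₁ C₂ : List (Layer (Fin n ⊕ Fin m))} {f₁ f₂ p₁ p₂}
    (h₁ : Impl C₁ f₁ p₁) (h₂ : Impl C₂ f₂ p₂) :
    Impl (C₁ ++ C₂) (fun a => f₁ (f₂ a)) (fun a => p₁ (f₂ a) * p₂ a) := by
  intro b a
  rw [stagedMatrix_append, Matrix.mul_apply, Finset.sum_eq_single (emb (f₂ a))]
  · rw [h₁, h₂, if_pos rfl]
    simp [ite_mul]
  · intro c _ hc; rw [h₂, if_neg hc, mul_zero]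
  · intro hm; exact absurd (Finset.mem_univ _) hm

lemma Impl.cnotLayer (L : List (CTGate (Fin n))) :
    Impl (m := m) [Layer.cnots (pOf (L.map liftG))] (actL L) (fun _ => 1) := by
  intro b a
  rw [stagedMatrix_cons, stagedMatrix_nil, mul_one, layer_cnots_apply, pOf_act, actL_liftL]

/-! ### The T stage -/

def liftS (S : Finset (Fin n)) : Finset (Fin n ⊕ Fin m) := S.map ⟨Sum.inl, Sum.inl_injective⟩

lemma mem_liftS {S : Finset (Fin n)} {x : Fin n ⊕ Fin m} :
    x ∈ liftS (m := m) S ↔ ∃ i ∈ S, Sum.inl i = x := by simp [liftS]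

lemma sum_liftS (S : Finset (Fin n)) (a : Fin n → ZMod 2) :
    ∑ x ∈ liftS (m := m) S, emb a x = ∑ i ∈ S, a i := by
  rw [liftS, Finset.sum_map]; rfl

def ancSpecs : (SS : List (Finset (Fin n))) → SS.length ≤ m →
    List (Finset (Fin n ⊕ Fin m) × (Fin n ⊕ Fin m))
  | [], _ => []
  | S :: r, h =>
      (liftS S, Sum.inr ⟨r.length, by simp at h; omega⟩) ::
        ancSpecs r (by simp at h; omega)

lemma ancSpecs_snd : ∀ (SS : List (Finset (Fin n))) (h : SS.length ≤ m) (x : Fin n ⊕ Fin m),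
    x ∈ (ancSpecs SS h).map Prod.snd → ∃ j : Fin m, x = Sum.inr j ∧ (j : ℕ) < SS.length := by
  intro SS
  induction SS with
  | nil => intro h x hx; simp [ancSpecs] at hx
  | cons S r ih =>
    intro h x hx
    simp only [ancSpecs, List.map_cons, List.mem_cons] at hx
    rcases hx with rfl | hx
    · exact ⟨_, rfl, by simp⟩
    · obtain ⟨j, rfl, hj⟩ := ih _ x hx
      exact ⟨j, rfl, by simp only [List.length_cons]; omega⟩

lemma ancSpecs_nodup : ∀ (SS : List (Finset (Fin n))) (h : SS.length ≤ m),
    ((ancSpecs SS h).map Prod.snd).Nodup := by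
  intro SS
  induction SS with
  | nil => intro h; simp [ancSpecs]
  | cons S r ih =>
    intro h
    simp only [ancSpecs, List.map_cons]
    rw [List.nodup_cons]
    refine ⟨?_, ih _⟩
    intro hm
    obtain ⟨j, hj, hlt⟩ := ancSpecs_snd r _ _ hm
    have hj' : (⟨r.length, by simp at h; omega⟩ : Fin m) = j := Sum.inr.inj hj
    rw [← hj'] at hlt
    simp at hlt

lemma ancSpecs_mem : ∀ (SS : List (Finset (Fin n))) (h : SS.length ≤ m),
    ∀ sp ∈ ancSpecs SS h, sp.2 ∉ sp.1 := by
  intro SS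
  induction SS with
  | nil => intro h sp hsp; simp [ancSpecs] at hsp
  | cons S r ih =>
    intro h sp hsp
    simp only [ancSpecs, List.mem_cons] at hsp
    rcases hsp with rfl | hsp
    · dsimp only
      intro hmem
      obtain ⟨i, _, hi⟩ := mem_liftS.mp hmem
      exact Sum.inl_ne_inr hi
    · exact ih _ sp hsp

lemma ancSpecs_fst : ∀ (SS : List (Finset (Fin n))) (h : SS.length ≤ m),
    ∀ sp ∈ ancSpecs SS h, ∀ x ∈ sp.1, ∃ i, x = Sum.inl i := by
  intro SS
  induction SS with
  | nil => intro h sp hsp; simp [ancSpecs] at hsp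
  | cons S r ih =>
    intro h sp hsp x hx
    simp only [ancSpecs, List.mem_cons] at hsp
    rcases hsp with rfl | hsp
    · obtain ⟨i, _, hi⟩ := mem_liftS.mp hx
      exact ⟨i, hi.symm⟩
    · exact ih _ sp hsp x hx

lemma ancSpecs_pairwise : ∀ (SS : List (Finset (Fin n))) (h : SS.length ≤ m),
    (ancSpecs SS h).Pairwise (fun sp sq => sq.2 ∉ sp.1) := by
  intro SS
  induction SS with
  | nil => intro h; simp [ancSpecs]
  | cons S r ih =>
    intro h
    simp only [ancSpecs]
    rw [List.pairwise_cons]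
    refine ⟨?_, ih _⟩
    intro sq hsq hmem
    obtain ⟨j, hj, _⟩ := ancSpecs_snd r _ _ (List.mem_map_of_mem (f := Prod.snd) hsq)
    obtain ⟨i, _, hi⟩ := mem_liftS.mp hmem
    rw [hj] at hi
    exact Sum.inl_ne_inr hi

lemma stage_impl (specs : List (Finset (Fin n ⊕ Fin m) × (Fin n ⊕ Fin m)))
    (hnd : (specs.map Prod.snd).Nodup)
    (hmem : ∀ sp ∈ specs, sp.2 ∉ sp.1)
    (hpw : specs.Pairwise fun sp sq => sq.2 ∉ sp.1) :
    Impl [Layer.cnots (runPairs specs).reverse,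
          Layer.tStage (specs.map Prod.snd).toFinset,
          Layer.cnots (runPairs specs)]
      id
      (fun a => (specs.map (fun sp =>
          if (emb a sp.2 + ∑ x ∈ sp.1, emb a x) = 1 then omega else 1)).prod) := by
  intro b a
  have hsm : stagedMatrix [Layer.cnots (runPairs specs).reverse,
      Layer.tStage (specs.map Prod.snd).toFinset, Layer.cnots (runPairs specs)]
      = layerMatrix (Layer.cnots (runPairs specs).reverse) *
        (layerMatrix (Layer.tStage (specs.map Prod.snd).toFinset) *
          layerMatrix (Layer.cnots (runPairs specs))) := by
    rw [stagedMatrix_cons, stagedMatrix_cons, stagedMatrix_cons, stagedMatrix_nil, mul_one]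
  have h1 := mul_apply_genperm (layer_tStage_apply (specs.map Prod.snd).toFinset)
    (layer_cnots_apply (runPairs specs))
  have h2 := mul_apply_genperm (layer_cnots_apply (runPairs specs).reverse) h1
  rw [hsm, h2]
  have hcancel : actL ((runPairs specs).reverse.map cg)
      (actL ((runPairs specs).map cg) (emb a)) = emb a := by
    rw [List.map_reverse]
    exact actL_rev _ _
  rw [hcancel]
  have hval : (∏ x ∈ (specs.map Prod.snd).toFinset,
        if (actL ((runPairs specs).map cg) (emb a)) x = 1 then omega else 1)
      = (specs.map (fun sp =>
          if (emb a sp.2 + ∑ x ∈ sp.1, emb a x) = 1 then omega else 1)).prod := by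
    rw [List.prod_toFinset _ hnd, List.map_map]
    refine congrArg List.prod (List.map_congr_left ?_)
    intro sp hsp
    have hw := (runPairs_act specs hnd hmem hpw (emb a)).2 sp hsp
    simp only [Function.comp_apply]
    rw [hw]
  rw [one_mul, mul_one, hval]
  rfl

lemma ancSpecs_prod (a : Fin n → ZMod 2) : ∀ (SS : List (Finset (Fin n))) (h : SS.length ≤ m),
    ((ancSpecs SS h).map (fun sp =>
        if (emb a sp.2 + ∑ x ∈ sp.1, emb a x) = 1 then omega else 1))
      = SS.map (fun S => chi S a) := by
  intro SS
  induction SS with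
  | nil => intro h; rfl
  | cons S r ih =>
    intro h
    simp only [ancSpecs, List.map_cons]
    refine congrArg₂ List.cons ?_ (ih _)
    simp [sum_liftS, chi]

lemma phase_impl (SS : List (Finset (Fin n))) (h : SS.length ≤ m + 1) :
    ∃ C : List (Layer (Fin n ⊕ Fin m)), tDepth C ≤ 1 ∧
      Impl C id (fun a => (SS.map (fun S => chi S a)).prod) := by
  cases SS with
  | nil =>
    refine ⟨[], by simp [tDepth], ?_⟩
    intro b a
    rw [stagedMatrix_nil]
    simp [Matrix.one_apply]
  | cons S₀ SS' =>
    have h' : SS'.length ≤ m := by simp at h; omega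
    by_cases h0 : S₀.Nonempty
    · have hi₀S : S₀.min' h0 ∈ S₀ := S₀.min'_mem h0
      set i₀ := S₀.min' h0 with hi₀
      set specs := ((liftS (S₀.erase i₀), (Sum.inl i₀ : Fin n ⊕ Fin m)) :: ancSpecs SS' h')
        with hspecs
      have hnd : (specs.map Prod.snd).Nodup := by
        rw [hspecs, List.map_cons, List.nodup_cons]
        refine ⟨?_, ancSpecs_nodup _ _⟩
        intro hm
        obtain ⟨j, hj, _⟩ := ancSpecs_snd SS' h' _ hm
        exact Sum.inl_ne_inr hj
      have hmem : ∀ sp ∈ specs, sp.2 ∉ sp.1 := by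
        intro sp hsp
        rcases List.mem_cons.mp hsp with rfl | hsp'
        · dsimp only
          intro hmem'
          obtain ⟨i, hi, hix⟩ := mem_liftS.mp hmem'
          have : i = i₀ := Sum.inl_injective hix
          rw [this] at hi
          exact (Finset.mem_erase.mp hi).1 rfl
        · exact ancSpecs_mem SS' h' sp hsp'
      have hpw : specs.Pairwise fun sp sq => sq.2 ∉ sp.1 := by
        rw [hspecs, List.pairwise_cons]
        refine ⟨?_, ancSpecs_pairwise _ _⟩
        intro sq hsq hmem'
        obtain ⟨j, hj, _⟩ := ancSpecs_snd SS' h' _ (List.mem_map_of_mem (f := Prod.snd) hsq)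
        obtain ⟨i, _, hix⟩ := mem_liftS.mp hmem'
        rw [hj] at hix
        exact Sum.inl_ne_inr hix
      refine ⟨_, by simp [tDepth], Impl.congr (stage_impl specs hnd hmem hpw)
        (fun a => rfl) ?_⟩
      intro a
      rw [hspecs, List.map_cons, List.map_cons, List.prod_cons, List.prod_cons]
      refine congrArg₂ (· * ·) ?_ ?_
      · have hsum : emb (m := m) a (Sum.inl i₀) + ∑ x ∈ liftS (m := m) (S₀.erase i₀), emb a x
            = ∑ i ∈ S₀, a i := by
          rw [emb_inl, sum_liftS, add_comm, Finset.sum_erase_add _ _ hi₀S]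
        dsimp only
        rw [hsum, chi]
      · exact (congrArg List.prod (ancSpecs_prod a SS' h')).symm
    · have hS0 : S₀ = ∅ := Finset.not_nonempty_iff_eq_empty.mp h0
      refine ⟨_, by simp [tDepth], Impl.congr (stage_impl (ancSpecs SS' h')
        (ancSpecs_nodup _ _) (ancSpecs_mem _ _) (ancSpecs_pairwise _ _))
        (fun a => rfl) ?_⟩
      intro a
      rw [List.map_cons, List.prod_cons]
      have hchi : chi S₀ a = 1 := by simp [chi, hS0]
      rw [hchi, one_mul]
      exact (congrArg List.prod (ancSpecs_prod a SS' h')).symm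

lemma batch_impl (A : List (CTGate (Fin n))) (hA : tCount A ≤ m + 1) :
    ∃ C : List (Layer (Fin n ⊕ Fin m)), tDepth C ≤ 1 ∧ Impl C (actL A) (phaseL A) := by
  obtain ⟨Cp, hCd, hCi⟩ := phase_impl (tSpecs A) (by rw [tSpecs_length]; exact hA)
  refine ⟨[Layer.cnots (pOf (A.map liftG))] ++ Cp, ?_, ?_⟩
  · rw [tDepth_append]
    simpa [tDepth] using hCd
  · exact Impl.congr (Impl.append (Impl.cnotLayer A) hCi) (fun a => rfl)
      (fun a => by rw [one_mul]; exact tSpecs_phase A a)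

lemma arith (k m' : ℕ) (hk : 1 ≤ k) :
    1 + (k - min k (m' + 1) + m') / (m' + 1) ≤ (k + m') / (m' + 1) := by
  rcases le_or_gt k (m' + 1) with h | h
  · have h1 : k - min k (m' + 1) + m' = m' := by omega
    rw [h1, Nat.div_eq_of_lt (by omega)]
    have h2 : 1 ≤ (k + m') / (m' + 1) := (Nat.one_le_div_iff (by omega)).mpr (by omega)
    omega
  · have h1 : k - min k (m' + 1) + m' = k - 1 := by omega
    have h2 : k + m' = (k - 1) + (m' + 1) := by omega
    rw [h1, h2, Nat.add_div_right _ (by omega)]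
    exact le_of_eq (Nat.add_comm _ _)

lemma main_impl : ∀ (k : ℕ) (L : List (CTGate (Fin n))), tCount L = k →
    ∃ C : List (Layer (Fin n ⊕ Fin m)), tDepth C ≤ (k + m) / (m + 1) ∧
      Impl C (actL L) (phaseL L) := by
  intro k
  induction k using Nat.strong_induction_on with
  | _ k ih =>
    intro L hk
    rcases Nat.eq_zero_or_pos k with rfl | hkpos
    · refine ⟨[Layer.cnots (pOf (L.map liftG))], by simp [tDepth], ?_⟩
      exact Impl.congr (Impl.cnotLayer L) (fun a => rfl)
        (fun a => phaseL_of_tCount_zero hk a)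
    · set t := min k (m + 1) with ht
      have ht1 : 1 ≤ t := by omega
      have htk : t ≤ tCount L := by rw [hk]; omega
      obtain ⟨A, B, hLAB, hA⟩ := exists_split L t htk
      have hB : tCount B = k - t := by
        rw [hLAB, tCount_append] at hk
        omega
      obtain ⟨CB, hBd, hBi⟩ := ih (k - t) (by omega) B hB
      obtain ⟨CA, hAd, hAi⟩ := batch_impl (m := m) A (by rw [hA]; omega)
      refine ⟨CA ++ CB, ?_, ?_⟩
      · rw [tDepth_append]
        calc tDepth CA + tDepth CB ≤ 1 + (k - t + m) / (m + 1) := add_le_add hAd hBd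
          _ ≤ (k + m) / (m + 1) := by rw [ht]; exact arith k m hkpos
      · rw [hLAB]
        exact Impl.congr (Impl.append hAi hBi) (fun a => actL_append A B a)
          (fun a => phaseL_append A B a)

end S9

/-- Any `{CNOT, T}` circuit on `n` qubits with `k` `T` gates can be implemented
on `n` qubits plus `m` clean ancillas by a `{CNOT, T}` staged circuit of
`T`-depth at most `⌈k/(m+1)⌉` (`= (k+m)/(m+1)` in natural division). -/
theorem stmt9 (n m k : ℕ) (L : List (CTGate (Fin n))) (hk : tCount L = k) :
    ∃ C : List (Layer (Fin n ⊕ Fin m)),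
      tDepth C ≤ (k + m) / (m + 1) ∧
      ∀ v : (Fin n → ZMod 2) → ℂ,
        (stagedMatrix C) *ᵥ embed n m v = embed n m (circMatrix L *ᵥ v) := by
  obtain ⟨C, hd, hi⟩ := S9.main_impl k L hk
  refine ⟨C, hd, fun v => ?_⟩
  funext b
  have hmv : (stagedMatrix C *ᵥ embed n m v) b
      = ∑ a' : (Fin n ⊕ Fin m) → ZMod 2, stagedMatrix C b a' * embed n m v a' := by
    simp [Matrix.mulVec, dotProduct]
  have h2 : ∀ (x : Fin n → ZMod 2) (y : Fin m → ZMod 2),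
      embed n m v (Sum.elim x y) = if y = 0 then v x else 0 := by
    intro x y
    simp [embed, funext_iff]
    congr
  have hLHS : ∑ a' : (Fin n ⊕ Fin m) → ZMod 2, stagedMatrix C b a' * embed n m v a'
      = ∑ x : Fin n → ZMod 2, stagedMatrix C b (S9.emb x) * v x := by
    rw [← Equiv.sum_comp (Equiv.sumArrowEquivProdArrow (Fin n) (Fin m) (ZMod 2)).symm
      (fun a' => stagedMatrix C b a' * embed n m v a'), Fintype.sum_prod_type]
    refine Finset.sum_congr rfl fun x _ => ?_
    rw [Finset.sum_eq_single (0 : Fin m → ZMod 2)]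
    · have e0 : ((Equiv.sumArrowEquivProdArrow (Fin n) (Fin m) (ZMod 2)).symm (x, 0))
          = S9.emb x := rfl
      rw [e0]
      have hembx : embed n m v (S9.emb x) = v x := by
        simp [embed, S9.emb]
      rw [hembx]
    · intro y _ hy
      have ey : ((Equiv.sumArrowEquivProdArrow (Fin n) (Fin m) (ZMod 2)).symm (x, y))
          = Sum.elim x y := rfl
      rw [ey, h2, if_neg hy, mul_zero]
    · intro hm; exact absurd (Finset.mem_univ _) hm
  rw [hmv, hLHS]
  by_cases hb : ∀ j : Fin m, b (Sum.inr j) = 0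
  · have hb2 : b = S9.emb (b ∘ Sum.inl) := by
      funext z
      cases z with
      | inl i => rfl
      | inr j => exact hb j
    have hrhs : embed n m (circMatrix L *ᵥ v) b
        = ∑ x : Fin n → ZMod 2, circMatrix L (b ∘ Sum.inl) x * v x := by
      simp only [embed]
      rw [if_pos hb]
      simp [Matrix.mulVec, dotProduct]
    rw [hrhs]
    refine Finset.sum_congr rfl fun x _ => ?_
    rw [hi b x, S9.circMatrix_apply]
    have hiff : (b = S9.emb (S9.actL L x)) ↔ (b ∘ Sum.inl = S9.actL L x) := by
      constructor
      · intro hh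
        rw [hh]
        funext i
        rfl
      · intro hh
        rw [hb2, hh]
    rw [if_congr hiff rfl rfl]
  · have hrhs : embed n m (circMatrix L *ᵥ v) b = 0 := by
      simp only [embed]
      rw [if_neg hb]
    rw [hrhs]
    refine Finset.sum_eq_zero fun x _ => ?_
    rw [hi b x, if_neg, zero_mul]
    intro hh
    exact hb (fun j => by rw [hh]; rfl)

end
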